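/- (Sum of all non-designated blocks is zero.) With the B-CP* construction, for any i, j ∈ [N_e] and k ∈ [N_r]: ∑_{γ ∈ [2N_eN_r] \ {α(k,i), β(k,i)}} ⟨a^{(b)}_{iγ} ∘ b^{(b)}_{jγ}, c^{(b)}_{kγ}⟩ = 0. -/

import Mathlib

noncomputable def pvec : Fin 4 → ℝ := ![1/2, 1/2, -(1/2), -(1/2)]
noncomputable def qvec : Fin 4 → ℝ := ![1/2, -(1/2), 1/2, -(1/2)]
noncomputable def rvec : Fin 4 → ℝ := ![1/2, 1/2, 1/2, 1/2]

noncomputable def trip (u v w : Fin 4 → ℝ) : ℝ := ∑ t : Fin 4, u t * v t * w t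

def iotaF (Ne γ : ℕ) : ℕ := ((γ - 1) % (2 * Ne)) % Ne + 1
def kappaF (Ne γ : ℕ) : ℕ := (γ - 1) / (2 * Ne) + 1
def alphaF (Ne k m : ℕ) : ℕ := 2 * Ne * (k - 1) + m
def betaF (Ne k m : ℕ) : ℕ := alphaF Ne k m + Ne

noncomputable def avec (Ne i γ : ℕ) : Fin 4 → ℝ :=
  if γ % Ne = i % Ne then pvec else qvec

noncomputable def bvec (Ne : ℕ) (x : ℕ → ℕ → ℕ → ℕ) (j γ : ℕ) : Fin 4 → ℝ :=
  if x (iotaF Ne γ) j (kappaF Ne γ) = 1 then pvec else rvec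

noncomputable def cvec (Ne k γ : ℕ) : Fin 4 → ℝ :=
  if (γ - 1) % (2 * Ne) < Ne ∨ kappaF Ne γ = k then rvec else -rvec

lemma trip_neg (u v w : Fin 4 → ℝ) : trip u v (-w) = - trip u v w := by
  simp [trip, mul_neg, Finset.sum_neg_distrib]

lemma trip_q_p_r : trip qvec pvec rvec = 0 := by
  norm_num [trip, Fin.sum_univ_succ, qvec, pvec, rvec]

lemma trip_q_r_r : trip qvec rvec rvec = 0 := by
  norm_num [trip, Fin.sum_univ_succ, qvec, rvec]

lemma eq_of_mod_eq (n a b : ℕ) (ha1 : 1 ≤ a) (ha2 : a ≤ n) (hb1 : 1 ≤ b) (hb2 : b ≤ n)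
    (h : a % n = b % n) : a = b := by
  rcases Nat.lt_or_ge a n with h1 | h1 <;> rcases Nat.lt_or_ge b n with h2 | h2
  · rwa [Nat.mod_eq_of_lt h1, Nat.mod_eq_of_lt h2] at h
  · have hb : b = n := le_antisymm hb2 h2
    rw [Nat.mod_eq_of_lt h1, hb, Nat.mod_self] at h; omega
  · have ha : a = n := le_antisymm ha2 h1
    rw [Nat.mod_eq_of_lt h2, ha, Nat.mod_self] at h; omega
  · omega

lemma halfshift (n d : ℕ) (hn : 0 < n) (h : d % (2*n) < n) :
    (d + n) % (2*n) = d % (2*n) + n ∧ (d + n) / (2*n) = d / (2*n) := by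
  have hdm := Nat.div_add_mod d (2*n)
  have hd : d + n = 2*n*(d/(2*n)) + (d % (2*n) + n) := by omega
  have hd' : d + n = (d % (2*n) + n) + 2*n*(d/(2*n)) := by omega
  constructor
  · rw [hd, Nat.mul_add_mod, Nat.mod_eq_of_lt (by omega)]
  · rw [hd', Nat.add_mul_div_left _ _ (by omega), Nat.div_eq_of_lt (by omega), Nat.zero_add]

lemma alpha_facts (n ki ii : ℕ) (hn : 0 < n) (hi1 : 1 ≤ ii) (hi2 : ii ≤ n) (hk : 1 ≤ ki) :
    (alphaF n ki ii - 1) % (2*n) = ii - 1 ∧ (alphaF n ki ii - 1) / (2*n) = ki - 1 ∧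
    (betaF n ki ii - 1) % (2*n) = ii - 1 + n ∧ (betaF n ki ii - 1) / (2*n) = ki - 1 := by
  have h1 : alphaF n ki ii - 1 = 2*n*(ki-1) + (ii-1) := by unfold alphaF; omega
  have h2 : betaF n ki ii - 1 = 2*n*(ki-1) + (ii-1+n) := by unfold betaF alphaF; omega
  refine ⟨?_, ?_, ?_, ?_⟩
  · rw [h1, Nat.mul_add_mod, Nat.mod_eq_of_lt (by omega)]
  · have h1' : alphaF n ki ii - 1 = (ii-1) + 2*n*(ki-1) := by rw [h1]; omega
    rw [h1', Nat.add_mul_div_left _ _ (by omega), Nat.div_eq_of_lt (by omega), Nat.zero_add]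
  · rw [h2, Nat.mul_add_mod, Nat.mod_eq_of_lt (by omega)]
  · have h2' : betaF n ki ii - 1 = (ii-1+n) + 2*n*(ki-1) := by rw [h2]; omega
    rw [h2', Nat.add_mul_div_left _ _ (by omega), Nat.div_eq_of_lt (by omega), Nat.zero_add]

theorem stmt15 (Ne Nr : ℕ) (hNe : 0 < Ne) (hNr : 0 < Nr)
    (x : ℕ → ℕ → ℕ → ℕ) (hx : ∀ i j k, x i j k = 0 ∨ x i j k = 1)
    (i j k : ℕ)
    (hi1 : 1 ≤ i) (hi2 : i ≤ Ne) (hj1 : 1 ≤ j) (hj2 : j ≤ Ne)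
    (hk1 : 1 ≤ k) (hk2 : k ≤ Nr) :
    ∑ γ ∈ (Finset.Icc 1 (2 * Ne * Nr)) \ {alphaF Ne k i, betaF Ne k i},
      trip (avec Ne i γ) (bvec Ne x j γ) (cvec Ne k γ) = 0 := by
  classical
  obtain ⟨hαm, hαd, hβm, hβd⟩ := alpha_facts Ne k i hNe hi1 hi2 hk1
  -- key cancellation lemma for first-half elements
  have key : ∀ δ : ℕ, 1 ≤ δ → (δ - 1) % (2*Ne) < Ne → δ ≠ alphaF Ne k i →
      trip (avec Ne i δ) (bvec Ne x j δ) (cvec Ne k δ) +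
      trip (avec Ne i (δ+Ne)) (bvec Ne x j (δ+Ne)) (cvec Ne k (δ+Ne)) = 0 := by
    intro δ h1 hlt hne
    have e1 : δ + Ne - 1 = (δ - 1) + Ne := by omega
    obtain ⟨e2, e3⟩ := halfshift Ne (δ-1) hNe hlt
    have ha : avec Ne i (δ+Ne) = avec Ne i δ := by
      unfold avec; rw [Nat.add_mod_right]
    have hio : iotaF Ne (δ+Ne) = iotaF Ne δ := by
      unfold iotaF; rw [e1, e2, Nat.add_mod_right]
    have hka : kappaF Ne (δ+Ne) = kappaF Ne δ := by
      unfold kappaF; rw [e1, e3]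
    have hb : bvec Ne x j (δ+Ne) = bvec Ne x j δ := by
      unfold bvec; rw [hio, hka]
    have hc1 : cvec Ne k δ = rvec := by
      unfold cvec; rw [if_pos (Or.inl hlt)]
    by_cases hk : kappaF Ne (δ+Ne) = k
    · -- designated block: a-vector must be qvec, both trips vanish
      have hq0 : (δ-1) / (2*Ne) = k - 1 := by
        unfold kappaF at hk; rw [e1, e3] at hk; omega
      have hav : avec Ne i δ = qvec := by
        unfold avec; rw [if_neg]
        intro hmod
        have hdm := Nat.div_add_mod (δ-1) (2*Ne)
        have hδ : δ = Ne*(2*((δ-1)/(2*Ne))) + ((δ-1) % (2*Ne) + 1) := by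
          have : 2*Ne*((δ-1)/(2*Ne)) = Ne*(2*((δ-1)/(2*Ne))) := by ring
          omega
        have hδmod : δ % Ne = ((δ-1) % (2*Ne) + 1) % Ne := by
          conv_lhs => rw [hδ]
          rw [Nat.mul_add_mod]
        have heq : (δ-1) % (2*Ne) + 1 = i := by
          apply eq_of_mod_eq Ne _ _ (by omega) (by omega) hi1 hi2
          rw [← hδmod, hmod]
        apply hne
        unfold alphaF
        have hdm2 := Nat.div_add_mod (δ-1) (2*Ne)
        have : 2*Ne*((δ-1)/(2*Ne)) = 2*Ne*(k-1) := by rw [hq0]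
        omega
      have hc2 : cvec Ne k (δ+Ne) = rvec := by
        unfold cvec; rw [if_pos (Or.inr hk)]
      rw [ha, hb, hav, hc1, hc2]
      unfold bvec
      split <;> simp [trip_q_p_r, trip_q_r_r]
    · have hc2 : cvec Ne k (δ+Ne) = -rvec := by
        unfold cvec; rw [if_neg]
        push_neg
        refine ⟨?_, hk⟩
        rw [e1, e2]; omega
      rw [ha, hb, hc1, hc2, trip_neg]
      ring
  have hcancel : ∀ γ ∈ (Finset.Icc 1 (2 * Ne * Nr)) \ {alphaF Ne k i, betaF Ne k i},
      trip (avec Ne i γ) (bvec Ne x j γ) (cvec Ne k γ) +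
      trip (avec Ne i (if (γ-1) % (2*Ne) < Ne then γ + Ne else γ - Ne))
        (bvec Ne x j (if (γ-1) % (2*Ne) < Ne then γ + Ne else γ - Ne))
        (cvec Ne k (if (γ-1) % (2*Ne) < Ne then γ + Ne else γ - Ne)) = 0 := by
    intro γ hγ
    simp only [Finset.mem_sdiff, Finset.mem_Icc, Finset.mem_insert, Finset.mem_singleton,
      not_or] at hγ
    obtain ⟨⟨hg1, hg2⟩, hgα, hgβ⟩ := hγ
    by_cases hlt : (γ-1) % (2*Ne) < Ne
    · simp only [if_pos hlt]
      exact key γ hg1 hlt hgα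
    · simp only [if_neg hlt]
      push_neg at hlt
      have hdm := Nat.div_add_mod (γ-1) (2*Ne)
      have hmlt := Nat.mod_lt (γ-1) (show 0 < 2*Ne by omega)
      have h1 : 1 ≤ γ - Ne := by omega
      have e0 : γ - Ne - 1 = (γ-1) - Ne := by omega
      have hdd : (γ-1) - Ne = 2*Ne*((γ-1)/(2*Ne)) + ((γ-1) % (2*Ne) - Ne) := by omega
      have e2 : (γ - Ne - 1) % (2*Ne) = (γ-1) % (2*Ne) - Ne := by
        rw [e0, hdd, Nat.mul_add_mod, Nat.mod_eq_of_lt (by omega)]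
      have hdd' : (γ-1) - Ne = ((γ-1) % (2*Ne) - Ne) + 2*Ne*((γ-1)/(2*Ne)) := by omega
      have e3 : (γ - Ne - 1) / (2*Ne) = (γ-1)/(2*Ne) := by
        rw [e0, hdd', Nat.add_mul_div_left _ _ (by omega), Nat.div_eq_of_lt (by omega),
          Nat.zero_add]
      have hlt2 : (γ - Ne - 1) % (2*Ne) < Ne := by rw [e2]; omega
      have hne2 : γ - Ne ≠ alphaF Ne k i := by
        intro h
        apply hgβ
        unfold betaF
        omega
      have := key (γ - Ne) h1 hlt2 hne2
      rw [show γ - Ne + Ne = γ by omega] at this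
      linarith
  have hgne : ∀ γ ∈ (Finset.Icc 1 (2 * Ne * Nr)) \ {alphaF Ne k i, betaF Ne k i},
      (if (γ-1) % (2*Ne) < Ne then γ + Ne else γ - Ne) ≠ γ := by
    intro γ hγ
    simp only [Finset.mem_sdiff, Finset.mem_Icc] at hγ
    by_cases hlt : (γ-1) % (2*Ne) < Ne
    · simp only [if_pos hlt]; omega
    · simp only [if_neg hlt]
      push_neg at hlt
      have hdm := Nat.div_add_mod (γ-1) (2*Ne)
      omega
  have hgmem : ∀ γ ∈ (Finset.Icc 1 (2 * Ne * Nr)) \ {alphaF Ne k i, betaF Ne k i},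
      (if (γ-1) % (2*Ne) < Ne then γ + Ne else γ - Ne) ∈
        (Finset.Icc 1 (2 * Ne * Nr)) \ {alphaF Ne k i, betaF Ne k i} := by
    intro γ hγ
    simp only [Finset.mem_sdiff, Finset.mem_Icc, Finset.mem_insert, Finset.mem_singleton,
      not_or] at hγ ⊢
    obtain ⟨⟨hg1, hg2⟩, hgα, hgβ⟩ := hγ
    have hdm := Nat.div_add_mod (γ-1) (2*Ne)
    have hmlt := Nat.mod_lt (γ-1) (show 0 < 2*Ne by omega)
    have hqlt : (γ-1)/(2*Ne) < Nr := by
      rw [Nat.div_lt_iff_lt_mul (show 0 < 2*Ne by omega)]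
      calc γ - 1 < 2*Ne*Nr := by omega
        _ = Nr * (2*Ne) := by ring
    have hqmul : 2*Ne*((γ-1)/(2*Ne)) + 2*Ne ≤ 2*Ne*Nr := by
      have h := Nat.mul_le_mul_left (2*Ne) (show (γ-1)/(2*Ne) + 1 ≤ Nr by omega)
      have hexp : 2*Ne*((γ-1)/(2*Ne) + 1) = 2*Ne*((γ-1)/(2*Ne)) + 2*Ne := by ring
      omega
    by_cases hlt : (γ-1) % (2*Ne) < Ne
    · simp only [if_pos hlt]
      have e1 : γ + Ne - 1 = (γ - 1) + Ne := by omega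
      obtain ⟨e2, e3⟩ := halfshift Ne (γ-1) hNe hlt
      refine ⟨⟨by omega, by omega⟩, ?_, ?_⟩
      · intro h
        have : (γ + Ne - 1) % (2*Ne) = (alphaF Ne k i - 1) % (2*Ne) := by rw [h]
        rw [e1, e2, hαm] at this
        omega
      · intro h
        apply hgα
        have hm : (γ + Ne - 1) % (2*Ne) = (betaF Ne k i - 1) % (2*Ne) := by rw [h]
        have hd : (γ + Ne - 1) / (2*Ne) = (betaF Ne k i - 1) / (2*Ne) := by rw [h]
        rw [e1, e2, hβm] at hm
        rw [e1, e3, hβd] at hd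
        unfold alphaF
        have : 2*Ne*((γ-1)/(2*Ne)) = 2*Ne*(k-1) := by rw [hd]
        omega
    · simp only [if_neg hlt]
      push_neg at hlt
      have e0 : γ - Ne - 1 = (γ-1) - Ne := by omega
      have hdd : (γ-1) - Ne = 2*Ne*((γ-1)/(2*Ne)) + ((γ-1) % (2*Ne) - Ne) := by omega
      have e2 : (γ - Ne - 1) % (2*Ne) = (γ-1) % (2*Ne) - Ne := by
        rw [e0, hdd, Nat.mul_add_mod, Nat.mod_eq_of_lt (by omega)]
      have hdd' : (γ-1) - Ne = ((γ-1) % (2*Ne) - Ne) + 2*Ne*((γ-1)/(2*Ne)) := by omega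
      have e3 : (γ - Ne - 1) / (2*Ne) = (γ-1)/(2*Ne) := by
        rw [e0, hdd', Nat.add_mul_div_left _ _ (by omega), Nat.div_eq_of_lt (by omega),
          Nat.zero_add]
      refine ⟨⟨by omega, by omega⟩, ?_, ?_⟩
      · intro h
        apply hgβ
        have hm : (γ - Ne - 1) % (2*Ne) = (alphaF Ne k i - 1) % (2*Ne) := by rw [h]
        have hd : (γ - Ne - 1) / (2*Ne) = (alphaF Ne k i - 1) / (2*Ne) := by rw [h]
        rw [e2, hαm] at hm
        rw [e3, hαd] at hd
        unfold betaF alphaF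
        have : 2*Ne*((γ-1)/(2*Ne)) = 2*Ne*(k-1) := by rw [hd]
        omega
      · intro h
        have : (γ - Ne - 1) % (2*Ne) = (betaF Ne k i - 1) % (2*Ne) := by rw [h]
        rw [e2, hβm] at this
        omega
  have hginv : ∀ γ ∈ (Finset.Icc 1 (2 * Ne * Nr)) \ {alphaF Ne k i, betaF Ne k i},
      (if ((if (γ-1) % (2*Ne) < Ne then γ + Ne else γ - Ne) - 1) % (2*Ne) < Ne
        then (if (γ-1) % (2*Ne) < Ne then γ + Ne else γ - Ne) + Ne
        else (if (γ-1) % (2*Ne) < Ne then γ + Ne else γ - Ne) - Ne) = γ := by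
    intro γ hγ
    simp only [Finset.mem_sdiff, Finset.mem_Icc] at hγ
    obtain ⟨⟨hg1, hg2⟩, -⟩ := hγ
    have hdm := Nat.div_add_mod (γ-1) (2*Ne)
    have hmlt := Nat.mod_lt (γ-1) (show 0 < 2*Ne by omega)
    by_cases hlt : (γ-1) % (2*Ne) < Ne
    · simp only [if_pos hlt]
      have e1 : γ + Ne - 1 = (γ - 1) + Ne := by omega
      obtain ⟨e2, -⟩ := halfshift Ne (γ-1) hNe hlt
      rw [if_neg (by rw [e1, e2]; omega)]
      omega
    · simp only [if_neg hlt]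
      push_neg at hlt
      have e0 : γ - Ne - 1 = (γ-1) - Ne := by omega
      have hdd : (γ-1) - Ne = 2*Ne*((γ-1)/(2*Ne)) + ((γ-1) % (2*Ne) - Ne) := by omega
      have e2 : (γ - Ne - 1) % (2*Ne) = (γ-1) % (2*Ne) - Ne := by
        rw [e0, hdd, Nat.mul_add_mod, Nat.mod_eq_of_lt (by omega)]
      rw [if_pos (by rw [e2]; omega)]
      omega
  exact Finset.sum_involution (fun γ _ => if (γ-1) % (2*Ne) < Ne then γ + Ne else γ - Ne)
    (fun γ hγ => hcancel γ hγ) (fun γ hγ _ => hgne γ hγ) (fun γ hγ => hgmem γ hγ)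
    (fun γ hγ => hginv γ hγ)
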